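/- Let F, g, γ with γL ≤ 1 be as in the extragradient setting and z⋆ a zero of F + ∂g. With Vₖ defined via the Lyapunov function V(z, z̄, z⁺) = (2/γ)⟨z - z⁺, F z - F z̄⟩ + (1/γ²)‖z⁺ - z̄‖² + (1/γ²)‖z - z⁺‖² evaluated at the extragradient iterates, it holds that ‖zᵏ⁺¹ - z⋆‖² ≤ ‖zᵏ - z⋆‖² - α(γ, L)·Vₖ for every k, where α(γ, L) = (γ²/2)(√(5 - 4γ²L²) - 1) ≥ 0. -/

import Mathlib

open scoped RealInnerProductSpace

/-- `g` is proper: finite somewhere and never `⊥`. -/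
def IsProperEF {H : Type*} (g : H → EReal) : Prop :=
  (∃ x, g x ≠ ⊤) ∧ ∀ x, g x ≠ ⊥

/-- `g` is convex (extended-real-valued). -/
def IsConvexEF {H : Type*} [NormedAddCommGroup H] [InnerProductSpace ℝ H]
    (g : H → EReal) : Prop :=
  ∀ x y : H, ∀ a b : ℝ, 0 ≤ a → 0 ≤ b → a + b = 1 →
    g (a • x + b • y) ≤ (a : EReal) * g x + (b : EReal) * g y

/-- `ξ` is a subgradient of `g` at `z`, i.e. `ξ ∈ ∂g(z)`. -/
def InSubdiff {H : Type*} [NormedAddCommGroup H] [InnerProductSpace ℝ H]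
    (g : H → EReal) (z ξ : H) : Prop :=
  ∀ y : H, g z + ((⟪ξ, y - z⟫ : ℝ) : EReal) ≤ g y

/-- `p = prox_{γ g}(x)`, i.e. `p` minimizes `g(·) + (1/(2γ))‖x - ·‖²`. -/
def IsProx {H : Type*} [NormedAddCommGroup H] [InnerProductSpace ℝ H]
    (g : H → EReal) (γ : ℝ) (x p : H) : Prop :=
  ∀ y : H, g p + ((1 / (2 * γ) * ‖x - p‖ ^ 2 : ℝ) : EReal) ≤
    g y + ((1 / (2 * γ) * ‖x - y‖ ^ 2 : ℝ) : EReal)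

/-- The Lyapunov function `V`. -/
noncomputable def lyapV {H : Type*} [NormedAddCommGroup H] [InnerProductSpace ℝ H]
    (F : H → H) (γ : ℝ) (z zb zp : H) : ℝ :=
  (2 / γ) * ⟪z - zp, F z - F zb⟫ + (1 / γ ^ 2) * ‖zp - zb‖ ^ 2 + (1 / γ ^ 2) * ‖z - zp‖ ^ 2

/-- Extract a real value from an EReal bounded above, not `⊥`. -/
lemma ereal_finite {a d : EReal} {c : ℝ} (hb : a ≠ ⊥) (hd : d ≠ ⊤)
    (h : a + (c : EReal) ≤ d) : ∃ r : ℝ, a = (r : EReal) := by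
  refine ⟨a.toReal, (EReal.coe_toReal (fun hT => ?_) hb).symm⟩
  rw [hT, EReal.top_add_coe] at h
  exact hd (top_le_iff.mp h)

/-- Prox points have finite `g`-value. -/
lemma prox_finite {H : Type*} [NormedAddCommGroup H] [InnerProductSpace ℝ H]
    {g : H → EReal} (hproper : IsProperEF g) {γ : ℝ} {x p : H}
    (hp : IsProx g γ x p) : ∃ r : ℝ, g p = (r : EReal) := by
  obtain ⟨x₀, hx₀⟩ := hproper.1
  exact ereal_finite (hproper.2 p)
    ((EReal.add_lt_top hx₀ (EReal.coe_ne_top _)).ne) (hp x₀)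

/-- A real-valued subgradient inequality. -/
lemma subgrad_real {H : Type*} [NormedAddCommGroup H] [InnerProductSpace ℝ H]
    {g : H → EReal} {zz ξ y : H} (h : InSubdiff g zz ξ) {a b : ℝ}
    (hz : g zz = (a : EReal)) (hy : g y = (b : EReal)) :
    a + ⟪ξ, y - zz⟫ ≤ b := by
  have h' := h y
  rw [hz, hy, ← EReal.coe_add, EReal.coe_le_coe_iff] at h'
  exact h'

/-- Limit argument: `K ≤ t * M` for all `t ∈ (0,1]` with `M ≥ 0` gives `K ≤ 0`. -/
lemma le_zero_of_forall_Ioc {K M : ℝ} (hM : 0 ≤ M)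
    (h : ∀ t : ℝ, 0 < t → t ≤ 1 → K ≤ t * M) : K ≤ 0 := by
  by_contra hK
  push_neg at hK
  have ht0 : 0 < K / (M + 1) := by positivity
  have h1 := h (min 1 (K / (M + 1))) (lt_min one_pos ht0) (min_le_left _ _)
  have h2 : min 1 (K / (M + 1)) ≤ K / (M + 1) := min_le_right _ _
  have hM1 : (0:ℝ) < M + 1 := by linarith
  have h3 : K / (M + 1) * M < K := by
    rw [div_mul_eq_mul_div, div_lt_iff₀ hM1]
    nlinarith
  nlinarith [mul_le_mul_of_nonneg_right h2 hM]

/-- The scaled subgradient inequality of a prox point. -/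
lemma prox_subgrad {H : Type*} [NormedAddCommGroup H] [InnerProductSpace ℝ H]
    {g : H → EReal} (hconv : IsConvexEF g) {γ : ℝ} (hγ : 0 < γ) {x p y : H}
    (hp : IsProx g γ x p) {gp gy : ℝ} (hgp : g p = (gp : EReal))
    (hgy : g y = (gy : EReal)) :
    γ * gp + ⟪x - p, y - p⟫ ≤ γ * gy := by
  have hne : γ ≠ 0 := hγ.ne'
  have main : ∀ t : ℝ, 0 < t → t ≤ 1 →
      2 * γ * gp + 2 * ⟪x - p, y - p⟫ - 2 * γ * gy ≤ t * ‖y - p‖ ^ 2 := by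
    intro t ht0 ht1
    have hcv := hconv p y (1 - t) t (by linarith) ht0.le (by ring)
    rw [hgp, hgy, ← EReal.coe_mul, ← EReal.coe_mul, ← EReal.coe_add] at hcv
    have hpt := hp ((1 - t) • p + t • y)
    rw [hgp] at hpt
    have hchain : ((gp + 1 / (2 * γ) * ‖x - p‖ ^ 2 : ℝ) : EReal)
        ≤ (((1 - t) * gp + t * gy + 1 / (2 * γ) * ‖x - ((1 - t) • p + t • y)‖ ^ 2 : ℝ) : EReal) := by
      rw [EReal.coe_add, EReal.coe_add]
      exact le_trans hpt (add_le_add_left hcv _)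
    rw [EReal.coe_le_coe_iff] at hchain
    have hexp : ‖x - ((1 - t) • p + t • y)‖ ^ 2
        = ‖x - p‖ ^ 2 - 2 * t * ⟪x - p, y - p⟫ + t ^ 2 * ‖y - p‖ ^ 2 := by
      have hv : x - ((1 - t) • p + t • y) = (x - p) - t • (y - p) := by
        rw [smul_sub, sub_smul, one_smul]
        abel
      rw [hv, norm_sub_sq_real, real_inner_smul_right, norm_smul, mul_pow,
        Real.norm_eq_abs, sq_abs]
      ring
    rw [hexp] at hchain
    have hchain' := mul_le_mul_of_nonneg_left hchain (by positivity : (0:ℝ) ≤ 2 * γ)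
    field_simp at hchain'
    have hmain' : t * (2 * γ * gp + 2 * ⟪x - p, y - p⟫ - 2 * γ * gy)
        ≤ t * (t * ‖y - p‖ ^ 2) := by nlinarith [hchain']
    exact (mul_le_mul_iff_right₀ ht0).mp hmain'
  have hK := le_zero_of_forall_Ioc (by positivity) main
  linarith

theorem stmt5 {H : Type*} [NormedAddCommGroup H] [InnerProductSpace ℝ H] [CompleteSpace H]
    (F : H → H) (L γ : ℝ) (hL : 0 < L)
    (hmono : ∀ x y : H, 0 ≤ ⟪F x - F y, x - y⟫)
    (hlip : ∀ x y : H, ‖F x - F y‖ ≤ L * ‖x - y‖)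
    (g : H → EReal) (hproper : IsProperEF g) (hconv : IsConvexEF g)
    (hlsc : LowerSemicontinuous g)
    (hγ0 : 0 < γ) (hγ1 : γ * L ≤ 1)
    (zstar : H) (hzstar : InSubdiff g zstar (-F zstar))
    (z zb : ℕ → H)
    (hzb : ∀ k, IsProx g γ (z k - γ • F (z k)) (zb k))
    (hz : ∀ k, IsProx g γ (z k - γ • F (zb k)) (z (k + 1))) :
    0 ≤ γ ^ 2 / 2 * (Real.sqrt (5 - 4 * γ ^ 2 * L ^ 2) - 1) ∧
      ∀ k : ℕ,
        ‖z (k + 1) - zstar‖ ^ 2 ≤ ‖z k - zstar‖ ^ 2 -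
          γ ^ 2 / 2 * (Real.sqrt (5 - 4 * γ ^ 2 * L ^ 2) - 1) *
            lyapV F γ (z k) (zb k) (z (k + 1)) := by
  have ht1 : γ ^ 2 * L ^ 2 ≤ 1 := by nlinarith [mul_pos hγ0 hL]
  have h5 : (1:ℝ) ≤ 5 - 4 * γ ^ 2 * L ^ 2 := by nlinarith
  set s : ℝ := Real.sqrt (5 - 4 * γ ^ 2 * L ^ 2) with hsdef
  have hs1 : 1 ≤ s := by
    rw [hsdef, show (1:ℝ) = Real.sqrt 1 by simp]
    exact Real.sqrt_le_sqrt h5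
  have hs2 : s ^ 2 = 5 - 4 * γ ^ 2 * L ^ 2 := Real.sq_sqrt (by linarith)
  have hα : 0 ≤ γ ^ 2 / 2 * (s - 1) := by nlinarith
  refine ⟨hα, fun k => ?_⟩
  obtain ⟨x₀, hx₀⟩ := hproper.1
  obtain ⟨gB, hgB⟩ := prox_finite hproper (hzb k)
  obtain ⟨gC, hgC⟩ := prox_finite hproper (hz k)
  obtain ⟨gS, hgS⟩ := ereal_finite (hproper.2 zstar) hx₀ (hzstar x₀)
  set A := z k with hA
  set B := zb k with hB
  set Cc := z (k + 1) with hCc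
  set S := zstar with hS
  set u := F A with hu
  set v := F B with hv
  set w := F S with hw
  have e1 : γ * gB + ⟪A - γ • u - B, Cc - B⟫ ≤ γ * gC :=
    prox_subgrad hconv hγ0 (hzb k) hgB hgC
  have e2 : γ * gC + ⟪A - γ • v - Cc, B - Cc⟫ ≤ γ * gB :=
    prox_subgrad hconv hγ0 (hz k) hgC hgB
  have e3 : γ * gC + ⟪A - γ • v - Cc, S - Cc⟫ ≤ γ * gS :=
    prox_subgrad hconv hγ0 (hz k) hgC hgS
  have e4 : gS + ⟪-w, B - S⟫ ≤ gB := subgrad_real hzstar hgS hgB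
  have e4' : γ * gS + γ * ⟪-w, B - S⟫ ≤ γ * gB := by nlinarith [e4]
  have h1in : ⟪A - γ • u - B, Cc - B⟫ + ⟪A - γ • v - Cc, B - Cc⟫ ≤ 0 := by linarith
  have h2in : ⟪A - γ • u - B, Cc - B⟫ + ⟪A - γ • v - Cc, S - Cc⟫
      + γ * ⟪-w, B - S⟫ ≤ 0 := by linarith
  have h3in : (0:ℝ) ≤ ⟪v - w, B - S⟫ := hmono B S
  have h4in : ‖u - v‖ ^ 2 ≤ L ^ 2 * ‖A - B‖ ^ 2 := by
    nlinarith [hlip A B, norm_nonneg (u - v), norm_nonneg (A - B), hL.le]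
  have hrin : (0:ℝ) ≤
      ‖γ • (u - v) + ((s + 1) / 2) • (B - S) - (Cc - S) - ((s - 1) / 2) • (A - S)‖ ^ 2 := by
    positivity
  have key : ‖A - S‖ ^ 2 - ‖Cc - S‖ ^ 2
      - (γ * (s - 1) * ⟪A - Cc, u - v⟫ + (s - 1) / 2 * ‖Cc - B‖ ^ 2
        + (s - 1) / 2 * ‖A - Cc‖ ^ 2)
      = (s - 1) * (-(⟪A - γ • u - B, Cc - B⟫ + ⟪A - γ • v - Cc, B - Cc⟫))
        + 2 * (-(⟪A - γ • u - B, Cc - B⟫ + ⟪A - γ • v - Cc, S - Cc⟫ + γ * ⟪-w, B - S⟫))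
        + 2 * γ * ⟪v - w, B - S⟫
        + γ ^ 2 * (L ^ 2 * ‖A - B‖ ^ 2 - ‖u - v‖ ^ 2)
        + ‖γ • (u - v) + ((s + 1) / 2) • (B - S) - (Cc - S) - ((s - 1) / 2) • (A - S)‖ ^ 2 := by
    simp only [← real_inner_self_eq_norm_sq, inner_sub_left, inner_sub_right,
      inner_add_left, inner_add_right, real_inner_smul_left, real_inner_smul_right,
      inner_neg_left, inner_neg_right]
    simp only [real_inner_comm B A, real_inner_comm Cc A, real_inner_comm S A,
      real_inner_comm u A, real_inner_comm v A, real_inner_comm w A,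
      real_inner_comm Cc B, real_inner_comm S B, real_inner_comm u B,
      real_inner_comm v B, real_inner_comm w B, real_inner_comm S Cc,
      real_inner_comm u Cc, real_inner_comm v Cc, real_inner_comm w Cc,
      real_inner_comm u S, real_inner_comm v S, real_inner_comm w S,
      real_inner_comm v u, real_inner_comm w u, real_inner_comm w v]
    linear_combination (-(⟪A, A⟫ - 2 * ⟪B, A⟫ + ⟪B, B⟫) / 4) * hs2
  have hVeq : γ ^ 2 / 2 * (s - 1) * lyapV F γ A B Cc
      = γ * (s - 1) * ⟪A - Cc, u - v⟫ + (s - 1) / 2 * ‖Cc - B‖ ^ 2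
        + (s - 1) / 2 * ‖A - Cc‖ ^ 2 := by
    rw [lyapV]
    field_simp
    ring
  have t1 : 0 ≤ (s - 1) * (-(⟪A - γ • u - B, Cc - B⟫ + ⟪A - γ • v - Cc, B - Cc⟫)) :=
    mul_nonneg (by linarith) (by linarith)
  have t2 : 0 ≤ 2 * (-(⟪A - γ • u - B, Cc - B⟫ + ⟪A - γ • v - Cc, S - Cc⟫
      + γ * ⟪-w, B - S⟫)) := by linarith
  have t3 : 0 ≤ 2 * γ * ⟪v - w, B - S⟫ := mul_nonneg (by linarith) h3in
  have t4 : 0 ≤ γ ^ 2 * (L ^ 2 * ‖A - B‖ ^ 2 - ‖u - v‖ ^ 2) :=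
    mul_nonneg (sq_nonneg γ) (by linarith)
  rw [hVeq] at *
  linarith [key, t1, t2, t3, t4, hrin]
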